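/- Let E be a real inner product space and let u, v ∈ E be nonzero with u ≠ v. Write a = ‖u‖², c = ‖v‖², and cos φ = ⟨u, v⟩/(‖u‖·‖v‖), and let β* = (c − √(a·c)·cos φ)/(a + c − 2·√(a·c)·cos φ). Then for any η ≥ 0, the approximate loss change with the optimal weight satisfies −η·‖β*·u + (1−β*)·v‖² = −η·(a·c·(1 − cos²φ))/(a + c − 2·√(a·c)·cos φ); equivalently, −η·[(β*)²·a + (1−β*)²·c + 2·β*·(1−β*)·√(a·c)·cos φ] equals −η·(a·c − a·c·cos²φ)/(a + c − 2·√(a·c)·cos φ). -/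

import Mathlib

/-- Approximate loss change at the optimal weight: for nonzero `u ≠ v` with `a = ‖u‖²`,
`c = ‖v‖²`, `cos φ = ⟨u,v⟩/(‖u‖·‖v‖)` and
`β* = (c − √(a·c)·cos φ)/(a + c − 2·√(a·c)·cos φ)`, for any `η ≥ 0`,
`−η·‖β*·u + (1−β*)·v‖² = −η·(a·c·(1 − cos²φ))/(a + c − 2·√(a·c)·cos φ)`, and equivalently
`−η·[(β*)²·a + (1−β*)²·c + 2β*(1−β*)·√(a·c)·cos φ]
  = −η·(a·c − a·c·cos²φ)/(a + c − 2·√(a·c)·cos φ)`. -/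
theorem loss_change_at_optimal_weight
    {E : Type*} [NormedAddCommGroup E] [InnerProductSpace ℝ E]
    (u v : E) (hu : u ≠ 0) (hv : v ≠ 0) (huv : u ≠ v)
    (a c cosφ βs : ℝ)
    (ha : a = ‖u‖ ^ 2) (hc : c = ‖v‖ ^ 2)
    (hcos : cosφ = (inner ℝ u v : ℝ) / (‖u‖ * ‖v‖))
    (hβs : βs = (c - Real.sqrt (a * c) * cosφ) /
      (a + c - 2 * Real.sqrt (a * c) * cosφ)) :
    ∀ η : ℝ, 0 ≤ η →
      (-η * ‖βs • u + (1 - βs) • v‖ ^ 2 =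
        -η * (a * c * (1 - cosφ ^ 2)) /
          (a + c - 2 * Real.sqrt (a * c) * cosφ)) ∧
      (-η * (βs ^ 2 * a + (1 - βs) ^ 2 * c +
          2 * βs * (1 - βs) * Real.sqrt (a * c) * cosφ) =
        -η * (a * c - a * c * cosφ ^ 2) /
          (a + c - 2 * Real.sqrt (a * c) * cosφ)) := by
  intro η hη
  have hnu : ‖u‖ ≠ 0 := norm_ne_zero_iff.mpr hu
  have hnv : ‖v‖ ≠ 0 := norm_ne_zero_iff.mpr hv
  have hsqrt : Real.sqrt (a * c) = ‖u‖ * ‖v‖ := by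
    rw [ha, hc, ← mul_pow, Real.sqrt_sq (by positivity)]
  have ht : Real.sqrt (a * c) * cosφ = (inner ℝ u v : ℝ) := by
    rw [hsqrt, hcos]; field_simp
  set t : ℝ := (inner ℝ u v : ℝ) with htdef
  have hcos2 : a * c * cosφ ^ 2 = t ^ 2 := by
    have : (Real.sqrt (a * c) * cosφ) ^ 2 = t ^ 2 := by rw [ht]
    rw [mul_pow, Real.sq_sqrt (by rw [ha, hc]; positivity)] at this
    linarith [this]
  have hD : a + c - 2 * t = ‖u - v‖ ^ 2 := by
    rw [ha, hc, @norm_sub_sq_real]; ring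
  have hDne : a + c - 2 * t ≠ 0 := by
    rw [hD]
    exact pow_ne_zero _ (norm_ne_zero_iff.mpr (sub_ne_zero.mpr huv))
  have hnorm : ‖βs • u + (1 - βs) • v‖ ^ 2 =
      βs ^ 2 * a + (1 - βs) ^ 2 * c + 2 * βs * (1 - βs) * t := by
    rw [@norm_add_sq_real, norm_smul, norm_smul, real_inner_smul_left,
      real_inner_smul_right, ha, hc]
    simp [mul_pow, sq_abs]
    ring
  have h2 : 2 * Real.sqrt (a * c) * cosφ = 2 * t := by rw [mul_assoc, ht]
  rw [h2, ht] at hβs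
  have hnum : a * c * (1 - cosφ ^ 2) = a * c - t ^ 2 := by linarith [hcos2]
  have hnum2 : a * c - a * c * cosφ ^ 2 = a * c - t ^ 2 := by linarith [hcos2]
  constructor
  · rw [hnorm, hβs, h2, hnum]
    field_simp [show a + c - t * 2 ≠ 0 by rwa [mul_comm]]
    ring
  · rw [mul_assoc (2 * βs * (1 - βs)), ht, h2, hβs, hnum2]
    field_simp [show a + c - t * 2 ≠ 0 by rwa [mul_comm]]
    ring
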